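/- Let n ≥ 2 and suppose positive integers x, y, z, w satisfy n^x = (n+1)^y + (n+2)^z + (n+3)^w. Then at least one of the following holds: (i) y is odd and n = 2^s − 2 for some integer s ≥ 2; (ii) y is even and n ∈ {g−2, 2g−2} for some odd positive integer g dividing 2^(x−1) − (−1)^x. -/

import Mathlib

lemma stmt_10_aux (n M : ℕ) (hn : 2 ≤ n) (hM : Odd M) (hd : (n + 2) ∣ 2 * M) :
    ∃ g : ℕ, 0 < g ∧ Odd g ∧ g ∣ M ∧ (n = g - 2 ∨ n = 2 * g - 2) := by
  rcases Nat.even_or_odd (n + 2) with he | ho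
  · obtain ⟨k, hk⟩ := he
    have hk2 : n + 2 = 2 * k := by omega
    have hkd : k ∣ M := by
      have h1 : 2 * k ∣ 2 * M := hk2 ▸ hd
      exact (mul_dvd_mul_iff_left (two_ne_zero)).mp h1
    have hko : Odd k := by
      rcases Nat.even_or_odd k with hke | hko
      · exfalso
        have h2 : 2 ∣ M := dvd_trans hke.two_dvd hkd
        rw [Nat.odd_iff] at hM
        omega
      · exact hko
    exact ⟨k, by omega, hko, hkd, Or.inr (by omega)⟩
  · have hcop : Nat.Coprime 2 (n + 2) := Nat.coprime_two_left.mpr ho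
    have hdM : (n + 2) ∣ M := (Nat.Coprime.dvd_of_dvd_mul_left hcop.symm hd)
    exact ⟨n + 2, by omega, ho, hdM, Or.inl (by omega)⟩

theorem stmt_10 (n x y z w : ℕ) (hn : 2 ≤ n)
    (hx : 1 ≤ x) (hy : 1 ≤ y) (hz : 1 ≤ z) (hw : 1 ≤ w)
    (heq : n ^ x = (n + 1) ^ y + (n + 2) ^ z + (n + 3) ^ w) :
    (Odd y ∧ ∃ s : ℕ, 2 ≤ s ∧ n = 2 ^ s - 2) ∨
    (Even y ∧ ∃ g : ℕ, 0 < g ∧ Odd g ∧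
      (g : ℤ) ∣ 2 ^ (x - 1) - (-1) ^ x ∧ (n = g - 2 ∨ n = 2 * g - 2)) := by
  -- x ≥ 2
  have hx2 : 2 ≤ x := by
    by_contra h
    have hx1 : x = 1 := by omega
    subst hx1
    have h1 : n + 1 ≤ (n + 1) ^ y := Nat.le_self_pow (by omega) _
    have h2 : n + 2 ≤ (n + 2) ^ z := Nat.le_self_pow (by omega) _
    have h3 : n + 3 ≤ (n + 3) ^ w := Nat.le_self_pow (by omega) _
    simp only [pow_one] at heq
    omega
  have heqz : (n : ℤ) ^ x = ((n : ℤ) + 1) ^ y + ((n : ℤ) + 2) ^ z + ((n : ℤ) + 3) ^ w := by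
    exact_mod_cast congrArg (Nat.cast : ℕ → ℤ) heq
  have h1 : (-2 : ℤ) ≡ (n : ℤ) [ZMOD ((n : ℤ) + 2)] :=
    Int.modEq_iff_dvd.mpr ⟨1, by ring⟩
  have h2 : (-1 : ℤ) ≡ (n : ℤ) + 1 [ZMOD ((n : ℤ) + 2)] :=
    Int.modEq_iff_dvd.mpr ⟨1, by ring⟩
  have h3 : (0 : ℤ) ≡ (n : ℤ) + 2 [ZMOD ((n : ℤ) + 2)] :=
    Int.modEq_iff_dvd.mpr ⟨1, by ring⟩
  have h4 : (1 : ℤ) ≡ (n : ℤ) + 3 [ZMOD ((n : ℤ) + 2)] :=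
    Int.modEq_iff_dvd.mpr ⟨1, by ring⟩
  have hbig : ((-2 : ℤ)) ^ x ≡ ((-1 : ℤ)) ^ y + 1 [ZMOD ((n : ℤ) + 2)] := by
    have hrhs := ((h2.pow y).add (h3.pow z)).add (h4.pow w)
    have hz0 : (0 : ℤ) ^ z = 0 := zero_pow (by omega)
    calc ((-2 : ℤ)) ^ x ≡ (n : ℤ) ^ x [ZMOD ((n : ℤ) + 2)] := h1.pow x
      _ = ((n : ℤ) + 1) ^ y + ((n : ℤ) + 2) ^ z + ((n : ℤ) + 3) ^ w := heqz
      _ ≡ (-1 : ℤ) ^ y + 0 ^ z + 1 ^ w [ZMOD ((n : ℤ) + 2)] := hrhs.symm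
      _ = (-1 : ℤ) ^ y + 1 := by rw [hz0, one_pow, add_zero]
  rcases Nat.even_or_odd y with hey | hoy
  · -- Even y case
    right
    refine ⟨hey, ?_⟩
    have hdvd : ((n : ℤ) + 2) ∣ (2 - (-2) ^ x) := by
      have := hbig.dvd
      rw [hey.neg_one_pow] at this
      simpa using this
    -- transform: (2 - (-2)^x) * (-1)^x = -(2 * (2^(x-1) - (-1)^x))
    have hkey : (2 - (-2 : ℤ) ^ x) * (-1) ^ x = -(2 * (2 ^ (x - 1) - (-1) ^ x)) := by
      have hx' : x - 1 + 1 = x := by omega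
      calc (2 - (-2 : ℤ) ^ x) * (-1) ^ x
          = 2 * (-1) ^ x - ((-2) * (-1)) ^ x := by rw [mul_pow]; ring
        _ = 2 * (-1) ^ x - 2 ^ x := by norm_num
        _ = -(2 * (2 ^ (x - 1) - (-1) ^ x)) := by
            rw [show (2 : ℤ) ^ x = 2 ^ (x - 1) * 2 from by rw [← pow_succ, hx']]; ring
    have hdvd2 : ((n : ℤ) + 2) ∣ 2 * (2 ^ (x - 1) - (-1) ^ x) := by
      have := hdvd.mul_right ((-1 : ℤ) ^ x)
      rw [hkey] at this
      exact (dvd_neg).mp this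
    rcases Nat.even_or_odd x with hex | hox
    · -- x even: m = 2^(x-1) - 1
      set M : ℕ := 2 ^ (x - 1) - 1 with hMdef
      have hMge : 1 ≤ 2 ^ (x - 1) := Nat.one_le_two_pow
      have hMz : (M : ℤ) = 2 ^ (x - 1) - (-1) ^ x := by
        rw [hex.neg_one_pow]
        push_cast [hMdef, Nat.cast_sub hMge]
        ring
      have hModd : Odd M := by
        have hpe : Even (2 ^ (x - 1)) := by
          have : x - 1 ≠ 0 := by omega
          exact (Nat.even_pow' this).mpr even_two
        rw [Nat.odd_iff]
        rw [Nat.even_iff] at hpe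
        omega
      have hdN : (n + 2) ∣ 2 * M := by
        have : ((n + 2 : ℕ) : ℤ) ∣ ((2 * M : ℕ) : ℤ) := by
          push_cast
          rw [hMz]
          exact_mod_cast hdvd2
        exact_mod_cast this
      obtain ⟨g, hg0, hgo, hgM, hgn⟩ := stmt_10_aux n M hn hModd hdN
      refine ⟨g, hg0, hgo, ?_, hgn⟩
      rw [← hMz]
      exact_mod_cast hgM
    · -- x odd: m = 2^(x-1) + 1
      set M : ℕ := 2 ^ (x - 1) + 1 with hMdef
      have hMz : (M : ℤ) = 2 ^ (x - 1) - (-1) ^ x := by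
        rw [hox.neg_one_pow]
        push_cast [hMdef]
        ring
      have hModd : Odd M := by
        have hpe : Even (2 ^ (x - 1)) := by
          have : x - 1 ≠ 0 := by omega
          exact (Nat.even_pow' this).mpr even_two
        rw [Nat.odd_iff]
        rw [Nat.even_iff] at hpe
        omega
      have hdN : (n + 2) ∣ 2 * M := by
        have : ((n + 2 : ℕ) : ℤ) ∣ ((2 * M : ℕ) : ℤ) := by
          push_cast
          rw [hMz]
          exact_mod_cast hdvd2
        exact_mod_cast this
      obtain ⟨g, hg0, hgo, hgM, hgn⟩ := stmt_10_aux n M hn hModd hdN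
      refine ⟨g, hg0, hgo, ?_, hgn⟩
      rw [← hMz]
      exact_mod_cast hgM
  · -- Odd y case
    left
    refine ⟨hoy, ?_⟩
    have hdvd : ((n : ℤ) + 2) ∣ (-2) ^ x := by
      have := hbig.dvd
      rw [hoy.neg_one_pow] at this
      simpa using this
    have hdN : (n + 2) ∣ 2 ^ x := by
      have h5 : ((n + 2 : ℕ) : ℤ).natAbs ∣ ((-2 : ℤ) ^ x).natAbs :=
        Int.natAbs_dvd_natAbs.mpr (by push_cast; exact_mod_cast hdvd)
      simpa [Int.natAbs_pow, show ((n:ℤ) + 2).natAbs = n + 2 by omega] using h5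
    obtain ⟨s, hs_le, hs_eq⟩ := (Nat.dvd_prime_pow Nat.prime_two).mp hdN
    have hs2 : 2 ≤ s := by
      by_contra h
      interval_cases s <;> omega
    exact ⟨s, hs2, by omega⟩
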